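/- Breadth-first equivalent-chase derivations do not agree on ranks of common atoms: there exist a factbase F and a ruleset 𝓡 together with two bf-E-derivations D₁ and D₂ from (F,𝓡) and an atom A ∈ F^{D₁} ∩ F^{D₂} with rank_{D₁}(A) ≠ rank_{D₂}(A). A witness is F = {p(z₁), q(z₂)} (z₁, z₂ variables) and 𝓡 the set of unary inclusion rules {p(x)→q(x), q(x)→p(x), q(x)→r(x), p(x)→r(x), r(x)→s(x), r(x)→p(x)}: with h₁ = {x↦z₁} and h₂ = {x↦z₂}, the bf-E-derivation with triggers (R_{pq},h₁),(R_{qr},h₂),(R_{pr},h₁),(R_{rs},h₂),(R_{rp},h₂) produces p(z₂) at rank 2, while the bf-E-derivation with triggers (R_{qp},h₂),(R_{qr},h₂),(R_{rs},h₂) produces p(z₂) at rank 1. -/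

import Mathlib

namespace ChasePaper

/-- Terms are variables or constants, both indexed by natural numbers. -/
inductive Term : Type where
  | var : ℕ → Term
  | const : ℕ → Term
deriving DecidableEq

instance : Encodable Term :=
  Encodable.ofEquiv (ℕ ⊕ ℕ)
    { toFun := fun t => match t with
        | .var n => Sum.inl n
        | .const n => Sum.inr n
      invFun := fun s => match s with
        | .inl n => .var n
        | .inr n => .const n
      left_inv := by intro t; cases t <;> rfl
      right_inv := by intro s; cases s <;> rfl }

/-- An atom is a predicate together with a list of argument terms. -/
structure Atom : Type where
  pred : ℕ
  args : List Term
deriving DecidableEq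

instance : Encodable Atom :=
  Encodable.ofEquiv (ℕ × List Term)
    { toFun := fun A => (A.pred, A.args)
      invFun := fun p => ⟨p.1, p.2⟩
      left_inv := by intro A; rfl
      right_inv := by intro p; rfl }

/-- The variables occurring in a term. -/
def Term.vars : Term → Finset ℕ
  | .var n => {n}
  | .const _ => ∅

/-- The variables occurring in an atom. -/
def Atom.vars (A : Atom) : Finset ℕ := A.args.toFinset.biUnion Term.vars

/-- Applying a substitution to a term. -/
def Term.subst (σ : ℕ → Term) : Term → Term
  | .var n => σ n
  | .const c => .const c

/-- Applying a substitution to an atom. -/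
def Atom.subst (σ : ℕ → Term) (A : Atom) : Atom := ⟨A.pred, A.args.map (Term.subst σ)⟩

/-- The variables occurring in a set of atoms. -/
def setVars (F : Set Atom) : Set ℕ := ⋃ A ∈ F, ↑A.vars

/-- `σ` is a homomorphism from the atomset `F` to the atomset `F'`. -/
def IsHomOn (σ : ℕ → Term) (F F' : Set Atom) : Prop := ∀ A ∈ F, A.subst σ ∈ F'

/-- `σ` is a retraction from `F` to its subset `F'`: it is the identity on the
terms of `F'` and maps `F` onto `F'`. -/
def IsRetraction (σ : ℕ → Term) (F F' : Set Atom) : Prop :=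
  F' ⊆ F ∧ (∀ x ∈ setVars F', σ x = Term.var x) ∧ (Atom.subst σ) '' F = F'

/-- An existential rule, given by its body and its head. -/
structure Rule : Type where
  body : List Atom
  head : List Atom
deriving DecidableEq

instance : Encodable Rule :=
  Encodable.ofEquiv (List Atom × List Atom)
    { toFun := fun R => (R.body, R.head)
      invFun := fun p => ⟨p.1, p.2⟩
      left_inv := by intro R; rfl
      right_inv := by intro p; rfl }

def Rule.bodyVars (R : Rule) : Finset ℕ := R.body.toFinset.biUnion Atom.vars
def Rule.headVars (R : Rule) : Finset ℕ := R.head.toFinset.biUnion Atom.vars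

/-- The frontier of a rule: the variables shared by its body and its head. -/
def Rule.frontier (R : Rule) : Finset ℕ := R.bodyVars ∩ R.headVars

/-- The existential variables of a rule: head variables not occurring in the body. -/
def Rule.existVars (R : Rule) : Finset ℕ := R.headVars \ R.bodyVars

/-- The substitution determined by an association list. -/
def SubL.fn (σ : List (ℕ × Term)) : ℕ → Term := fun n =>
  match σ.find? (fun p => p.1 == n) with
  | some p => p.2
  | none => Term.var n

/-- A trigger: a rule together with a substitution, represented as an association list. -/
structure Trigger : Type where
  rule : Rule
  π : List (ℕ × Term)
deriving DecidableEq

instance : Encodable Trigger :=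
  Encodable.ofEquiv (Rule × List (ℕ × Term))
    { toFun := fun t => (t.rule, t.π)
      invFun := fun p => ⟨p.1, p.2⟩
      left_inv := by intro t; rfl
      right_inv := by intro p; rfl }

/-- The homomorphism π of a trigger, as a substitution. -/
def Trigger.πfn (t : Trigger) : ℕ → Term := SubL.fn t.π

/-- The fresh variable `z_t` associated to trigger `t` and existential variable `z`. -/
def Trigger.freshVar (t : Trigger) (z : ℕ) : Term :=
  Term.var (Nat.pair (Encodable.encode t) z)

/-- The extension `π^s` of `π`, mapping each existential variable of the head to a
fresh variable indexed by the trigger. -/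
def Trigger.πs (t : Trigger) : ℕ → Term := fun n =>
  if n ∈ t.rule.existVars then t.freshVar n else t.πfn n

/-- support(t) = π(body(R)). -/
def Trigger.support (t : Trigger) : Finset Atom :=
  (t.rule.body.map (Atom.subst t.πfn)).toFinset

/-- output(t) = π^s(head(R)). -/
def Trigger.output (t : Trigger) : Finset Atom :=
  (t.rule.head.map (Atom.subst t.πs)).toFinset

/-- A trigger is applicable on a factbase `F` if π maps the rule body into `F`. -/
def Trigger.applicableOn (t : Trigger) (F : Finset Atom) : Prop := t.support ⊆ F

instance (t : Trigger) (F : Finset Atom) : Decidable (t.applicableOn F) :=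
  inferInstanceAs (Decidable (t.support ⊆ F))

/-- The factbase obtained after `i` steps from `F0` along the (partial) sequence
of triggers `ts`. -/
def chainFacts (F0 : Finset Atom) (ts : ℕ → Option Trigger) : ℕ → Finset Atom
  | 0 => F0
  | i + 1 =>
    chainFacts F0 ts i ∪
      (match ts i with
        | some t => t.output
        | none => ∅)

/-- A derivation from the knowledge base `(F0, 𝓡)`: a (possibly infinite) sequence
of pairwise distinct triggers of rules of `𝓡`, each applicable on the factbase
produced so far. -/
structure Derivation (𝓡 : Set Rule) (F0 : Finset Atom) : Type where
  ts : ℕ → Option Trigger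
  mem_rules : ∀ i t, ts i = some t → t.rule ∈ 𝓡
  applic : ∀ i t, ts i = some t → t.applicableOn (chainFacts F0 ts i)
  distinct : ∀ i j t, ts i = some t → ts j = some t → i = j

namespace Derivation

variable {𝓡 : Set Rule} {F0 : Finset Atom}

/-- The factbase `F_i` of the derivation. -/
def facts (D : Derivation 𝓡 F0) (i : ℕ) : Finset Atom := chainFacts F0 D.ts i

/-- `F^D`, the set of all atoms inferred by the derivation. -/
def allFacts (D : Derivation 𝓡 F0) : Set Atom := ⋃ i, ↑(D.facts i)

/-- The set of triggers used by the derivation. -/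
def trigSet (D : Derivation 𝓡 F0) : Set Trigger := {t | ∃ i, D.ts i = some t}

/-- The list of the triggers of `D` at positions `< i`, in order. -/
def hist (D : Derivation 𝓡 F0) (i : ℕ) : List Trigger := (List.range i).filterMap D.ts

def rankAux (D : Derivation 𝓡 F0) : ℕ → Atom → ℕ
  | 0, _ => 0
  | i + 1, A =>
    if A ∈ D.facts i then D.rankAux i A
    else
      match D.ts i with
      | some t => t.support.sup (D.rankAux i) + 1
      | none => 0

open Classical in
/-- The rank of an atom in a derivation (`0` for atoms not inferred by `D`): initial
atoms have rank 0, and an atom produced by a trigger has rank one plus the maximal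
rank of the atoms in the support of this trigger. -/
noncomputable def rank (D : Derivation 𝓡 F0) (A : Atom) : ℕ :=
  if h : ∃ i, A ∈ D.facts i then D.rankAux (Nat.find h) A else 0

/-- The rank of the trigger applied at position `i` (`0` if there is none):
one plus the maximal rank of the atoms of its support. -/
noncomputable def trigRank (D : Derivation 𝓡 F0) (i : ℕ) : ℕ :=
  match D.ts i with
  | some t => t.support.sup D.rank + 1
  | none => 0

/-- The depth of a derivation: the maximal rank of its atoms (possibly `⊤`). -/
noncomputable def depth (D : Derivation 𝓡 F0) : ℕ∞ :=
  ⨆ A ∈ D.allFacts, (D.rank A : ℕ∞)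

/-- Rank-compatibility: later triggers have larger or equal rank. -/
def RankCompatible (D : Derivation 𝓡 F0) : Prop :=
  ∀ i j, i < j → D.ts i ≠ none → D.ts j ≠ none → D.trigRank i ≤ D.trigRank j

/-- Position `i` is a rank mark: the next applied trigger has strictly greater rank. -/
def RankMark (D : Derivation 𝓡 F0) (i : ℕ) : Prop :=
  D.ts i ≠ none ∧
    ∃ j, i < j ∧ D.ts j ≠ none ∧ D.trigRank i < D.trigRank j ∧
      ∀ l, i < l → l < j → D.ts l = none

lemma chainFacts_congr (F0 : Finset Atom) (ts ts' : ℕ → Option Trigger) :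
    ∀ i, (∀ j, j < i → ts' j = ts j) → chainFacts F0 ts' i = chainFacts F0 ts i := by
  intro i
  induction i with
  | zero => intro _; rfl
  | succ i ih =>
    intro h
    have h1 := ih (fun j hj => h j (Nat.lt_succ_of_lt hj))
    have h2 := h i (Nat.lt_succ_self i)
    simp only [chainFacts, h1, h2]

/-- The prefix of `D` keeping only the triggers at positions `< k`. -/
def prefixD (D : Derivation 𝓡 F0) (k : ℕ) : Derivation 𝓡 F0 where
  ts := fun i => if i < k then D.ts i else none
  mem_rules := by
    intro i t h
    by_cases hik : i < k
    · exact D.mem_rules i t (by simpa [hik] using h)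
    · simp [hik] at h
  applic := by
    intro i t h
    by_cases hik : i < k
    · have heq : chainFacts F0 (fun i => if i < k then D.ts i else none) i
          = chainFacts F0 D.ts i :=
        chainFacts_congr F0 D.ts _ i (fun j hj => by
          have hjk : j < k := lt_trans hj hik
          simp [hjk])
      rw [heq]
      exact D.applic i t (by simpa [hik] using h)
    · simp [hik] at h
  distinct := by
    intro i j t hi hj
    by_cases hik : i < k
    · by_cases hjk : j < k
      · exact D.distinct i j t (by simpa [hik] using hi) (by simpa [hjk] using hj)
      · simp [hjk] at hj
    · simp [hik] at hi

/-- `D'` agrees with `D` on all positions `< k`, i.e. `D'` extends the `k`-prefix of `D`. -/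
def ExtendsPrefix (D' D : Derivation 𝓡 F0) (k : ℕ) : Prop :=
  ∀ i, i < k → D'.ts i = D.ts i

/-- Finiteness of a derivation. -/
def IsFinite (D : Derivation 𝓡 F0) : Prop := ∃ N, ∀ i, N ≤ i → D.ts i = none

/-- The atom `A` is produced at step `i` of the derivation. -/
def producedAt (D : Derivation 𝓡 F0) (i : ℕ) (A : Atom) : Prop :=
  A ∈ D.facts (i + 1) ∧ A ∉ D.facts i

/-- Edges of the chase graph of `D`. -/
def edge (D : Derivation 𝓡 F0) (A' A : Atom) : Prop :=
  ∃ i t, D.ts i = some t ∧ D.producedAt i A ∧ A' ∈ t.support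

/-- `A'` is an ancestor of `A`: there is a nonempty path from `A'` to `A` in the
chase graph of `D`. -/
def anc (D : Derivation 𝓡 F0) (A' A : Atom) : Prop := Relation.TransGen D.edge A' A

open Classical in
/-- The prime ancestors of `A`: its ancestors lying in the initial factbase. -/
noncomputable def anc0 (D : Derivation 𝓡 F0) (A : Atom) : Finset Atom :=
  F0.filter (fun A' => D.anc A' A)

/-- The factbases of the restriction of `D` to an initial factbase `G`. -/
def restFacts (D : Derivation 𝓡 F0) (G : Finset Atom) : ℕ → Finset Atom
  | 0 => G
  | i + 1 =>
    restFacts D G i ∪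
      (match D.ts i with
        | some t => if t.applicableOn (restFacts D G i) then t.output else ∅
        | none => ∅)

/-- The trigger sequence of the restriction of `D` to `G`: a trigger of `D` is kept
exactly when it is applicable at the corresponding point. -/
def restTs (D : Derivation 𝓡 F0) (G : Finset Atom) : ℕ → Option Trigger := fun i =>
  match D.ts i with
  | some t => if t.applicableOn (restFacts D G i) then some t else none
  | none => none

lemma restTs_eq_some {D : Derivation 𝓡 F0} {G : Finset Atom} {i : ℕ} {t : Trigger}
    (h : restTs D G i = some t) :
    D.ts i = some t ∧ t.applicableOn (restFacts D G i) := by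
  unfold restTs at h
  cases hd : D.ts i with
  | none => rw [hd] at h; simp at h
  | some t' =>
    rw [hd] at h
    dsimp only at h
    by_cases ha : t'.applicableOn (restFacts D G i)
    · rw [if_pos ha] at h
      injection h with h'
      subst h'
      exact ⟨rfl, ha⟩
    · rw [if_neg ha] at h; simp at h

lemma chainFacts_restTs (D : Derivation 𝓡 F0) (G : Finset Atom) (i : ℕ) :
    chainFacts G (restTs D G) i = restFacts D G i := by
  induction i with
  | zero => rfl
  | succ i ih =>
    simp only [chainFacts, restFacts, ih]
    congr 1
    unfold restTs
    cases hd : D.ts i with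
    | none => rfl
    | some t =>
      by_cases ha : t.applicableOn (restFacts D G i) <;> simp [ha]

/-- The restriction of `D` to the initial factbase `G`: the maximal derivation from
`(G,𝓡)` that only uses the triggers of `D`, in the given order. -/
def restrict (D : Derivation 𝓡 F0) (G : Finset Atom) : Derivation 𝓡 G where
  ts := restTs D G
  mem_rules := fun i t h => D.mem_rules i t (restTs_eq_some h).1
  applic := fun i t h => by
    rw [chainFacts_restTs D G i]
    exact (restTs_eq_some h).2
  distinct := fun i j t hi hj =>
    D.distinct i j t (restTs_eq_some hi).1 (restTs_eq_some hj).1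

end Derivation

/-- An applicability condition: a predicate on (previously applied triggers, current
factbase, candidate trigger). A chase variant is the class of derivations induced by
such a condition. -/
def AppCond : Type := List Trigger → Finset Atom → Trigger → Prop

/-- `D` is an X-derivation of the chase variant given by the condition `C`: every
trigger of `D` is `C`-applicable on the corresponding prefix of `D`. -/
def IsDeriv (C : AppCond) {𝓡 : Set Rule} {F0 : Finset Atom} (D : Derivation 𝓡 F0) : Prop :=
  ∀ i t, D.ts i = some t → C (D.hist i) (D.facts i) t

/-- Oblivious applicability: the trigger is applicable and has not been applied before. -/
def OCond : AppCond := fun h F t => t.applicableOn F ∧ t ∉ h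

/-- Semi-oblivious applicability: no previously applied trigger of the same rule maps
the frontier in the same way. -/
def SOCond : AppCond := fun h F t =>
  t.applicableOn F ∧
    ¬ ∃ t' ∈ h, t'.rule = t.rule ∧ ∀ x ∈ t.rule.frontier, t'.πfn x = t.πfn x

/-- Restricted applicability: there is no retraction from `F ∪ output(t)` to `F`. -/
def RCond : AppCond := fun _ F t =>
  t.applicableOn F ∧
    ¬ ∃ σ : ℕ → Term, IsRetraction σ (↑(F ∪ t.output)) (↑F)

/-- Equivalent-chase applicability: there is no homomorphism from `F ∪ output(t)` to `F`. -/
def ECond : AppCond := fun _ F t =>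
  t.applicableOn F ∧
    ¬ ∃ σ : ℕ → Term, IsHomOn σ (↑(F ∪ t.output)) (↑F)

/-- Breadth-first derivations of the chase variant `C`: rank-compatible `C`-derivations
such that at every rank mark the corresponding prefix cannot be properly extended to a
`C`-derivation of the same depth. -/
def IsBF (C : AppCond) {𝓡 : Set Rule} {F0 : Finset Atom} (D : Derivation 𝓡 F0) : Prop :=
  IsDeriv C D ∧ D.RankCompatible ∧
    ∀ i, D.RankMark i →
      ¬ ∃ D' : Derivation 𝓡 F0, IsDeriv C D' ∧ D'.ExtendsPrefix D (i + 1) ∧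
          (∃ j, i + 1 ≤ j ∧ D'.ts j ≠ none) ∧ D'.depth = (D.prefixD (i + 1)).depth

/-- Fairness of a derivation with respect to the condition `C`: every trigger that
becomes applicable is eventually applied or ceases to be applicable. -/
def IsFair (C : AppCond) {𝓡 : Set Rule} {F0 : Finset Atom} (D : Derivation 𝓡 F0) : Prop :=
  ∀ i t, t.rule ∈ 𝓡 → C (D.hist i) (D.facts i) t →
    ∃ k, i ≤ k ∧ (D.ts k = some t ∨ ¬ C (D.hist (k + 1)) (D.facts (k + 1)) t)

/-- A class of derivations (a chase variant). -/
def DerivClass := ∀ (𝓡 : Set Rule) (F0 : Finset Atom), Derivation 𝓡 F0 → Prop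

/-- The class of `C`-derivations. -/
def derivClassOf (C : AppCond) : DerivClass := fun _ _ D => IsDeriv C D

/-- The class of breadth-first `C`-derivations. -/
def bfClassOf (C : AppCond) : DerivClass := fun _ _ D => IsBF C D

/-- The chase variant `X` preserves ancestry: for every `X`-derivation `D` and atom
`A` inferred (but not initial), there is an `X`-derivation from the prime ancestors
of `A` producing `A` at the same rank. -/
def PreservesAncestry (X : DerivClass) : Prop :=
  ∀ (𝓡 : Set Rule) (F : Finset Atom) (D : Derivation 𝓡 F) (A : Atom),
    X 𝓡 F D → A ∈ D.allFacts → A ∉ F →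
      ∃ D' : Derivation 𝓡 (D.anc0 A),
        X 𝓡 (D.anc0 A) D' ∧ A ∈ D'.allFacts ∧ D'.rank A = D.rank A

/-- The chase variant `X` is hereditary: restricting an `X`-derivation to a subset of
the initial factbase again yields an `X`-derivation. -/
def Hereditary (X : DerivClass) : Prop :=
  ∀ (𝓡 : Set Rule) (F G : Finset Atom), G ⊆ F →
    ∀ D : Derivation 𝓡 F, X 𝓡 F D → X 𝓡 G (D.restrict G)


/- The witness of STATEMENT 19: F = {p(z₁), q(z₂)} with variables z₁, z₂ and the
unary inclusion rules 𝓡 = {p→q, q→p, q→r, p→r, r→s, r→p}; the predicates p, q, r, s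
are encoded as 0, 1, 2, 3, the rule variable x as 0 and z₁, z₂ as 1, 2. -/

/-- The unary inclusion rule p₁(x) → p₂(x). -/
def incl (p₁ p₂ : ℕ) : Rule := ⟨[⟨p₁, [.var 0]⟩], [⟨p₂, [.var 0]⟩]⟩

def z1 : Term := .var 1
def z2 : Term := .var 2

def F19 : Finset Atom := {⟨0, [z1]⟩, ⟨1, [z2]⟩}
def Rs19 : Set Rule := {incl 0 1, incl 1 0, incl 1 2, incl 0 2, incl 2 3, incl 2 0}

/-- x ↦ z₁ -/
def h1 : List (ℕ × Term) := [(0, z1)]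
/-- x ↦ z₂ -/
def h2 : List (ℕ × Term) := [(0, z2)]

/-- The atom p(z₂). -/
def pz2 : Atom := ⟨0, [z2]⟩


def t1 : Trigger := ⟨incl 0 1, h1⟩
def t2 : Trigger := ⟨incl 1 2, h2⟩
def t3 : Trigger := ⟨incl 0 2, h1⟩
def t4 : Trigger := ⟨incl 2 3, h2⟩
def t5 : Trigger := ⟨incl 2 0, h2⟩
def u1 : Trigger := ⟨incl 1 0, h2⟩

def L1 : List Trigger := [t1, t2, t3, t4, t5]
def L2 : List Trigger := [u1, t2, t4]

example : chainFacts F19 (L1[·]?) 5 = {⟨0,[z1]⟩,⟨1,[z2]⟩,⟨1,[z1]⟩,⟨2,[z2]⟩,⟨2,[z1]⟩,⟨3,[z2]⟩,⟨0,[z2]⟩} := by decide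
example : ∀ i, i < 5 → ∀ t, L1[i]? = some t → t.applicableOn (chainFacts F19 (L1[·]?) i) := by decide
example : L1.Nodup := by decide

def mkDeriv (l : List Trigger) (hnd : l.Nodup) (hmem : ∀ t ∈ l, t.rule ∈ Rs19)
    (happ : ∀ i, i < l.length → ∀ t, l[i]? = some t →
      t.applicableOn (chainFacts F19 (l[·]?) i)) : Derivation Rs19 F19 where
  ts := (l[·]?)
  mem_rules := fun _ t h => hmem t (List.mem_of_getElem? h)
  applic := fun i t h => happ i (List.getElem?_eq_some_iff.mp h).1 t h
  distinct := fun i j t hi hj =>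
    (List.getElem?_inj (List.getElem?_eq_some_iff.mp hi).1 hnd).mp (hi.trans hj.symm)

lemma rs_mem : ∀ t ∈ L1, t.rule ∈ Rs19 := by
  intro t ht
  simp [L1, t1, t2, t3, t4, t5] at ht
  rcases ht with h|h|h|h|h <;> subst h <;> simp [Rs19]

lemma rs_mem2 : ∀ t ∈ L2, t.rule ∈ Rs19 := by
  intro t ht
  simp [L2, u1, t2, t4] at ht
  rcases ht with h|h|h <;> subst h <;> simp [Rs19]

def D1 : Derivation Rs19 F19 := mkDeriv L1 (by decide) rs_mem (by decide)
def D2 : Derivation Rs19 F19 := mkDeriv L2 (by decide) rs_mem2 (by decide)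

example : D1.facts 5 = {⟨0,[z1]⟩,⟨1,[z2]⟩,⟨1,[z1]⟩,⟨2,[z2]⟩,⟨2,[z1]⟩,⟨3,[z2]⟩,⟨0,[z2]⟩} := by decide
example : D1.ts 0 = some t1 := rfl
example : ∀ i, 5 ≤ i → D1.ts i = none := fun i hi => List.getElem?_eq_none_iff.mpr hi
example : D1.rankAux 5 pz2 = 2 := by decide

namespace Derivation
variable {R : Set Rule} {F0 : Finset Atom}

lemma facts_succ_subset (D : Derivation R F0) (i : ℕ) : D.facts i ⊆ D.facts (i+1) := by
  simp only [Derivation.facts, chainFacts]; exact Finset.subset_union_left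

lemma facts_mono (D : Derivation R F0) {i j : ℕ} (h : i ≤ j) : D.facts i ⊆ D.facts j := by
  induction j with
  | zero => simp_all
  | succ j ih =>
    rcases Nat.lt_or_ge i (j+1) with h'|h'
    · exact (ih (Nat.lt_succ_iff.mp h')).trans (D.facts_succ_subset j)
    · have : i = j + 1 := le_antisymm h h'
      subst this; rfl

lemma facts_succ_none (D : Derivation R F0) {i : ℕ} (h : D.ts i = none) :
    D.facts (i+1) = D.facts i := by
  simp only [Derivation.facts, chainFacts, h]; simp

lemma facts_succ_some (D : Derivation R F0) {i : ℕ} {t : Trigger} (h : D.ts i = some t) :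
    D.facts (i+1) = D.facts i ∪ t.output := by
  simp only [Derivation.facts, chainFacts, h]

lemma rank_eq (D : Derivation R F0) (A : Atom) (n : ℕ) (h1 : A ∈ D.facts n)
    (h2 : ∀ m, m < n → A ∉ D.facts m) : D.rank A = D.rankAux n A := by
  unfold Derivation.rank
  rw [dif_pos ⟨n, h1⟩]
  congr 1
  exact Nat.find_eq_iff _ |>.mpr ⟨h1, fun m hm => h2 m hm⟩

lemma rankAux_congr {R' : Set Rule} (D : Derivation R F0) (D' : Derivation R' F0) :
    ∀ n, (∀ j, j < n → D'.ts j = D.ts j) → ∀ A, D'.rankAux n A = D.rankAux n A := by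
  intro n
  induction n with
  | zero => intro _ A; rfl
  | succ n ih =>
    intro h A
    have hf : D'.facts n = D.facts n :=
      chainFacts_congr F0 D.ts D'.ts n (fun j hj => h j (Nat.lt_succ_of_lt hj))
    have hts : D'.ts n = D.ts n := h n (Nat.lt_succ_self n)
    have ihA := ih (fun j hj => h j (Nat.lt_succ_of_lt hj))
    simp only [Derivation.rankAux, hf, hts, ihA]
    cases D.ts n with
    | none => rfl
    | some t =>
      by_cases hA : A ∈ D.facts n
      · simp [hA, ihA]
      · simp [hA, Finset.sup_congr rfl (fun B _ => ihA B)]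

lemma rankAux_stable (D : Derivation R F0) {A : Atom} {i : ℕ} (hA : A ∈ D.facts i) :
    D.rankAux (i+1) A = D.rankAux i A := by
  simp only [Derivation.rankAux, hA, if_pos]

lemma facts_congr {R' : Set Rule} (D : Derivation R F0) (D' : Derivation R' F0) (n : ℕ)
    (h : ∀ j, j < n → D'.ts j = D.ts j) : D'.facts n = D.facts n :=
  chainFacts_congr F0 D.ts D'.ts n h

lemma prefixD_facts (D : Derivation R F0) (k : ℕ) :
    ∀ i, (D.prefixD k).facts i = D.facts (min i k) := by
  intro i
  induction i with
  | zero => rw [Nat.zero_min]; rfl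
  | succ i ih =>
    by_cases h : i < k
    · have hts : (D.prefixD k).ts i = D.ts i := by simp [Derivation.prefixD, h]
      have hmin : min i k = i := min_eq_left (le_of_lt h)
      have hmin2 : min (i+1) k = i + 1 := min_eq_left h
      rw [hmin2]
      cases hd : D.ts i with
      | none => rw [D.facts_succ_none hd, (D.prefixD k).facts_succ_none (by rw [hts, hd]),
          ih, hmin]
      | some t => rw [D.facts_succ_some hd, (D.prefixD k).facts_succ_some (by rw [hts, hd]),
          ih, hmin]
    · have hts : (D.prefixD k).ts i = none := by simp [Derivation.prefixD, h]
      have hmin : min i k = k := min_eq_right (le_of_not_gt h)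
      have hmin2 : min (i+1) k = k := min_eq_right (by omega)
      rw [hmin2, (D.prefixD k).facts_succ_none hts, ih, hmin]

end Derivation

-- concrete atoms
def Ap1 : Atom := ⟨0,[z1]⟩
def Ap2 : Atom := ⟨0,[z2]⟩
def Aq1 : Atom := ⟨1,[z1]⟩
def Aq2 : Atom := ⟨1,[z2]⟩
def Ar1 : Atom := ⟨2,[z1]⟩
def Ar2 : Atom := ⟨2,[z2]⟩
def As2 : Atom := ⟨3,[z2]⟩

-- concrete fact bases of D1
def G1f : ℕ → Finset Atom
  | 0 => {Ap1, Aq2}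
  | 1 => {Ap1, Aq2, Aq1}
  | 2 => {Ap1, Aq2, Aq1, Ar2}
  | 3 => {Ap1, Aq2, Aq1, Ar2, Ar1}
  | 4 => {Ap1, Aq2, Aq1, Ar2, Ar1, As2}
  | _ => {Ap1, Aq2, Aq1, Ar2, Ar1, As2, Ap2}

def G2f : ℕ → Finset Atom
  | 0 => {Ap1, Aq2}
  | 1 => {Ap1, Aq2, Ap2}
  | 2 => {Ap1, Aq2, Ap2, Ar2}
  | _ => {Ap1, Aq2, Ap2, Ar2, As2}

lemma D1_facts : ∀ i, i ≤ 5 → D1.facts i = G1f i := by decide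
lemma D2_facts : ∀ i, i ≤ 3 → D2.facts i = G2f i := by decide

-- ranks in D1
lemma D1_rank_p1 : D1.rank Ap1 = 0 := by
  rw [D1.rank_eq Ap1 0 (by decide) (by omega)]; rfl
lemma D1_rank_q2 : D1.rank Aq2 = 0 := by
  rw [D1.rank_eq Aq2 0 (by decide) (by omega)]; rfl
lemma D1_rank_r2 : D1.rank Ar2 = 1 := by
  rw [D1.rank_eq Ar2 2 (by decide) (by decide)]; decide
lemma D1_rank_pz2 : D1.rank pz2 = 2 := by
  rw [D1.rank_eq pz2 5 (by decide) (by decide)]; decide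

-- ranks in D2
lemma D2_rank_q2 : D2.rank Aq2 = 0 := by
  rw [D2.rank_eq Aq2 0 (by decide) (by omega)]; rfl
lemma D2_rank_r2 : D2.rank Ar2 = 1 := by
  rw [D2.rank_eq Ar2 2 (by decide) (by decide)]; decide
lemma D2_rank_pz2 : D2.rank pz2 = 1 := by
  rw [D2.rank_eq pz2 1 (by decide) (by decide)]; decide

-- trigger ranks
lemma D1_tr0 : D1.trigRank 0 = 1 := by
  show t1.support.sup D1.rank + 1 = 1
  rw [show t1.support = {Ap1} from by decide, Finset.sup_singleton, D1_rank_p1]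
lemma D1_tr1 : D1.trigRank 1 = 1 := by
  show t2.support.sup D1.rank + 1 = 1
  rw [show t2.support = {Aq2} from by decide, Finset.sup_singleton, D1_rank_q2]
lemma D1_tr2 : D1.trigRank 2 = 1 := by
  show t3.support.sup D1.rank + 1 = 1
  rw [show t3.support = {Ap1} from by decide, Finset.sup_singleton, D1_rank_p1]
lemma D1_tr3 : D1.trigRank 3 = 2 := by
  show t4.support.sup D1.rank + 1 = 2
  rw [show t4.support = {Ar2} from by decide, Finset.sup_singleton, D1_rank_r2]
lemma D1_tr4 : D1.trigRank 4 = 2 := by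
  show t5.support.sup D1.rank + 1 = 2
  rw [show t5.support = {Ar2} from by decide, Finset.sup_singleton, D1_rank_r2]

lemma D2_tr0 : D2.trigRank 0 = 1 := by
  show u1.support.sup D2.rank + 1 = 1
  rw [show u1.support = {Aq2} from by decide, Finset.sup_singleton, D2_rank_q2]
lemma D2_tr1 : D2.trigRank 1 = 1 := by
  show t2.support.sup D2.rank + 1 = 1
  rw [show t2.support = {Aq2} from by decide, Finset.sup_singleton, D2_rank_q2]
lemma D2_tr2 : D2.trigRank 2 = 2 := by
  show t4.support.sup D2.rank + 1 = 2
  rw [show t4.support = {Ar2} from by decide, Finset.sup_singleton, D2_rank_r2]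

lemma D1_ts_lt {i : ℕ} (h : D1.ts i ≠ none) : i < 5 := by
  by_contra hc
  exact h (List.getElem?_eq_none_iff.mpr (by simpa [L1] using Nat.le_of_not_lt hc))
lemma D2_ts_lt {i : ℕ} (h : D2.ts i ≠ none) : i < 3 := by
  by_contra hc
  exact h (List.getElem?_eq_none_iff.mpr (by simpa [L2] using Nat.le_of_not_lt hc))

lemma D1_rc : D1.RankCompatible := by
  intro i j hij hi hj
  have hi5 := D1_ts_lt hi
  have hj5 := D1_ts_lt hj
  interval_cases j <;> interval_cases i <;>
    simp [D1_tr0, D1_tr1, D1_tr2, D1_tr3, D1_tr4] <;> omega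

lemma D2_rc : D2.RankCompatible := by
  intro i j hij hi hj
  have hi3 := D2_ts_lt hi
  have hj3 := D2_ts_lt hj
  interval_cases j <;> interval_cases i <;>
    simp [D2_tr0, D2_tr1, D2_tr2] <;> omega

lemma D1_isderiv : IsDeriv ECond D1 := by
  intro i t h
  have hi : i < 5 := D1_ts_lt (by rw [h]; simp)
  interval_cases i
  · injection h with h; subst h
    refine ⟨by decide, ?_⟩
    rintro ⟨σ, hσ⟩
    rw [D1_facts 0 (by omega), show t1.output = {Aq1} from by decide] at hσ
    have h1 := hσ ⟨0,[Term.var 1]⟩ (Finset.mem_coe.mpr (by decide))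
    have h2 := hσ ⟨1,[Term.var 1]⟩ (Finset.mem_coe.mpr (by decide))
    simp [Atom.subst, Term.subst, G1f, Ap1, Aq2, Aq1, z1, z2, Atom.mk.injEq] at h1 h2
    rw [h1] at h2; simp at h2
  · injection h with h; subst h
    refine ⟨by decide, ?_⟩
    rintro ⟨σ, hσ⟩
    rw [D1_facts 1 (by omega), show t2.output = {Ar2} from by decide] at hσ
    have h1 := hσ ⟨2,[Term.var 2]⟩ (Finset.mem_coe.mpr (by decide))
    simp [Atom.subst, Term.subst, G1f, Ap1, Aq2, Aq1, z1, z2, Atom.mk.injEq] at h1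
  · injection h with h; subst h
    refine ⟨by decide, ?_⟩
    rintro ⟨σ, hσ⟩
    rw [D1_facts 2 (by omega), show t3.output = {Ar1} from by decide] at hσ
    have h1 := hσ ⟨0,[Term.var 1]⟩ (Finset.mem_coe.mpr (by decide))
    have h2 := hσ ⟨2,[Term.var 1]⟩ (Finset.mem_coe.mpr (by decide))
    simp [Atom.subst, Term.subst, G1f, Ap1, Aq2, Aq1, Ar2, Ar1, z1, z2, Atom.mk.injEq] at h1 h2
    rw [h1] at h2; simp at h2
  · injection h with h; subst h
    refine ⟨by decide, ?_⟩
    rintro ⟨σ, hσ⟩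
    rw [D1_facts 3 (by omega), show t4.output = {As2} from by decide] at hσ
    have h1 := hσ ⟨3,[Term.var 2]⟩ (Finset.mem_coe.mpr (by decide))
    simp [Atom.subst, Term.subst, G1f, Ap1, Aq2, Aq1, Ar2, Ar1, z1, z2, Atom.mk.injEq] at h1
  · injection h with h; subst h
    refine ⟨by decide, ?_⟩
    rintro ⟨σ, hσ⟩
    rw [D1_facts 4 (by omega), show t5.output = {Ap2} from by decide] at hσ
    have h1 := hσ ⟨0,[Term.var 2]⟩ (Finset.mem_coe.mpr (by decide))
    have h2 := hσ ⟨3,[Term.var 2]⟩ (Finset.mem_coe.mpr (by decide))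
    simp [Atom.subst, Term.subst, G1f, Ap1, Aq2, Aq1, Ar2, Ar1, As2, z1, z2,
      Atom.mk.injEq] at h1 h2
    rw [h1] at h2; simp at h2

lemma D2_isderiv : IsDeriv ECond D2 := by
  intro i t h
  have hi : i < 3 := D2_ts_lt (by rw [h]; simp)
  interval_cases i
  · injection h with h; subst h
    refine ⟨by decide, ?_⟩
    rintro ⟨σ, hσ⟩
    rw [D2_facts 0 (by omega), show u1.output = {Ap2} from by decide] at hσ
    have h1 := hσ ⟨0,[Term.var 2]⟩ (Finset.mem_coe.mpr (by decide))
    have h2 := hσ ⟨1,[Term.var 2]⟩ (Finset.mem_coe.mpr (by decide))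
    simp [Atom.subst, Term.subst, G2f, Ap1, Aq2, Ap2, z1, z2, Atom.mk.injEq] at h1 h2
    rw [h1] at h2; simp at h2
  · injection h with h; subst h
    refine ⟨by decide, ?_⟩
    rintro ⟨σ, hσ⟩
    rw [D2_facts 1 (by omega), show t2.output = {Ar2} from by decide] at hσ
    have h1 := hσ ⟨2,[Term.var 2]⟩ (Finset.mem_coe.mpr (by decide))
    simp [Atom.subst, Term.subst, G2f, Ap1, Aq2, Ap2, z1, z2, Atom.mk.injEq] at h1
  · injection h with h; subst h
    refine ⟨by decide, ?_⟩
    rintro ⟨σ, hσ⟩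
    rw [D2_facts 2 (by omega), show t4.output = {As2} from by decide] at hσ
    have h1 := hσ ⟨3,[Term.var 2]⟩ (Finset.mem_coe.mpr (by decide))
    simp [Atom.subst, Term.subst, G2f, Ap1, Aq2, Ap2, Ar2, z1, z2, Atom.mk.injEq] at h1

lemma rankAux_succ_some {R : Set Rule} {F0 : Finset Atom} (D : Derivation R F0) {i : ℕ}
    {t : Trigger} (h : D.ts i = some t) {A : Atom} (hA : A ∉ D.facts i) :
    D.rankAux (i+1) A = t.support.sup (D.rankAux i) + 1 := by
  simp only [Derivation.rankAux, if_neg hA, h]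

lemma incl_existVars (a b : ℕ) : (incl a b).existVars = ∅ := by
  simp [incl, Rule.existVars, Rule.headVars, Rule.bodyVars, Atom.vars, Term.vars]

lemma support_incl {t : Trigger} {a b : ℕ} (h : t.rule = incl a b) :
    t.support = {⟨a, [t.πfn 0]⟩} := by
  simp [Trigger.support, h, incl, Atom.subst, Term.subst]

lemma output_incl {t : Trigger} {a b : ℕ} (h : t.rule = incl a b) :
    t.output = {⟨b, [t.πfn 0]⟩} := by
  simp [Trigger.output, h, incl, Atom.subst, Term.subst, Trigger.πs, Rule.existVars,
    Rule.headVars, Rule.bodyVars, Atom.vars, Term.vars]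

lemma no_ext (D : Derivation Rs19 F19) (k v : ℕ) (G : Finset Atom)
    (hG : D.facts k = G)
    (hmap : ∀ A ∈ G, A.subst (fun _ => Term.var v) ∈ G)
    (hb : ∀ b, b ≤ 2 → (⟨b, [Term.var v]⟩ : Atom) ∈ G)
    (hvar : ∀ A ∈ G, A.args = [Term.var 1] ∨ A.args = [Term.var 2])
    (hnoS : ∀ u, (⟨3, [u]⟩ : Atom) ∉ G)
    (hrk : ∀ u, (⟨2, [u]⟩ : Atom) ∈ G → D.rankAux k ⟨2, [u]⟩ = 1)
    (hdep : (D.prefixD k).depth = 1) :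
    ¬ ∃ D' : Derivation Rs19 F19, IsDeriv ECond D' ∧ D'.ExtendsPrefix D k ∧
        (∃ j, k ≤ j ∧ D'.ts j ≠ none) ∧ D'.depth = (D.prefixD k).depth := by
  rintro ⟨D', hderiv, hext, hex, hdepth⟩
  classical
  let j0 := Nat.find hex
  obtain ⟨hk0, hne0⟩ : k ≤ j0 ∧ D'.ts j0 ≠ none := Nat.find_spec hex
  have hmin : ∀ l, k ≤ l → l < j0 → D'.ts l = none := by
    intro l hl hlj
    by_contra hc
    exact Nat.find_min hex hlj ⟨hl, hc⟩
  have hfk : D'.facts k = G := by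
    rw [D.facts_congr D' k (fun j hj => hext j hj), hG]
  have hfacts : ∀ d, k + d ≤ j0 → D'.facts (k + d) = G := by
    intro d
    induction d with
    | zero => intro _; exact hfk
    | succ d ih =>
      intro hd
      rw [← Nat.add_assoc, D'.facts_succ_none (hmin (k+d) (by omega) (by omega))]
      exact ih (by omega)
  have hfj0 : D'.facts j0 = G := by
    have := hfacts (j0 - k) (by omega)
    rwa [Nat.add_sub_cancel' hk0] at this
  obtain ⟨t, ht⟩ : ∃ t, D'.ts j0 = some t := Option.ne_none_iff_exists'.mp hne0
  obtain ⟨happ, hnohom⟩ := hderiv j0 t ht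
  rw [show D'.facts j0 = G from hfj0] at happ hnohom
  have hrule := D'.mem_rules j0 t ht
  -- the support atom of t
  have hbadcase : ∀ a b : ℕ, b ≤ 2 → t.rule = incl a b → False := by
    intro a b hb2 hr
    have hA : (⟨a, [t.πfn 0]⟩ : Atom) ∈ G := by
      have := happ
      rw [Trigger.applicableOn, support_incl hr, Finset.singleton_subset_iff] at this
      exact this
    have hargs := hvar _ hA
    apply hnohom
    refine ⟨fun _ => Term.var v, ?_⟩
    intro A hA'
    rw [output_incl hr] at hA'
    rw [Finset.mem_coe, Finset.mem_union, Finset.mem_singleton] at hA'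
    rcases hA' with hA' | rfl
    · exact Finset.mem_coe.mpr (hmap A hA')
    · have : (⟨b, [t.πfn 0]⟩ : Atom).subst (fun _ => Term.var v) = ⟨b, [Term.var v]⟩ := by
        simp at hargs
        rcases hargs with h' | h' <;> simp [Atom.subst, h', Term.subst]
      rw [this]
      exact Finset.mem_coe.mpr (hb b hb2)
  -- dispatch rules
  have hgood : t.rule = incl 2 3 := by
    rcases hrule with hr | hr | hr | hr | hr | hr
    · exact absurd hr (fun h => hbadcase 0 1 (by omega) h)
    · exact absurd hr (fun h => hbadcase 1 0 (by omega) h)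
    · exact absurd hr (fun h => hbadcase 1 2 (by omega) h)
    · exact absurd hr (fun h => hbadcase 0 2 (by omega) h)
    · exact hr
    · exact absurd hr (fun h => hbadcase 2 0 (by omega) h)
  have hA : (⟨2, [t.πfn 0]⟩ : Atom) ∈ G := by
    have := happ
    rw [Trigger.applicableOn, support_incl hgood, Finset.singleton_subset_iff] at this
    exact this
  set u := t.πfn 0 with hu
  -- the new atom s(u)
  have hA'facts : (⟨3, [u]⟩ : Atom) ∈ D'.facts (j0 + 1) := by
    rw [D'.facts_succ_some ht, output_incl hgood]
    exact Finset.mem_union_right _ (Finset.mem_singleton_self _)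
  have hA'not : ∀ m, m < j0 + 1 → (⟨3, [u]⟩ : Atom) ∉ D'.facts m := by
    intro m hm hc
    exact hnoS u (hfj0 ▸ D'.facts_mono (by omega : m ≤ j0) hc)
  have hrank : D'.rank ⟨3, [u]⟩ = 2 := by
    rw [D'.rank_eq _ (j0+1) hA'facts hA'not,
      rankAux_succ_some D' ht (hA'not j0 (by omega)),
      support_incl hgood, Finset.sup_singleton]
    have hstep : ∀ d, k + d ≤ j0 → D'.rankAux (k + d) ⟨2, [u]⟩ = D'.rankAux k ⟨2, [u]⟩ := by
      intro d
      induction d with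
      | zero => intro _; rfl
      | succ d ih =>
        intro hd
        rw [← Nat.add_assoc, D'.rankAux_stable (by rw [hfacts d (by omega)]; exact hA)]
        exact ih (by omega)
    have h0 := hstep (j0 - k) (by omega)
    rw [Nat.add_sub_cancel' hk0] at h0
    rw [h0, D.rankAux_congr D' k (fun j hj => hext j hj), hrk u hA]
  have hge : (2 : ℕ∞) ≤ D'.depth := by
    have hmem : (⟨3, [u]⟩ : Atom) ∈ D'.allFacts :=
      Set.mem_iUnion.mpr ⟨j0 + 1, Finset.mem_coe.mpr hA'facts⟩
    calc (2 : ℕ∞) = ((D'.rank ⟨3, [u]⟩ : ℕ) : ℕ∞) := by rw [hrank]; rfl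
    _ ≤ D'.depth := le_iSup₂_of_le _ hmem le_rfl
  rw [hdepth, hdep] at hge
  norm_num at hge
-- ranks in the prefixes
lemma P1_rank_p1 : (D1.prefixD 3).rank Ap1 = 0 := by
  rw [Derivation.rank_eq _ _ 0 (by decide) (by omega)]; rfl
lemma P1_rank_q2 : (D1.prefixD 3).rank Aq2 = 0 := by
  rw [Derivation.rank_eq _ _ 0 (by decide) (by omega)]; rfl
lemma P1_rank_q1 : (D1.prefixD 3).rank Aq1 = 1 := by
  rw [Derivation.rank_eq _ _ 1 (by decide) (by decide)]; decide
lemma P1_rank_r2 : (D1.prefixD 3).rank Ar2 = 1 := by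
  rw [Derivation.rank_eq _ _ 2 (by decide) (by decide)]; decide
lemma P1_rank_r1 : (D1.prefixD 3).rank Ar1 = 1 := by
  rw [Derivation.rank_eq _ _ 3 (by decide) (by decide)]; decide

lemma P2_rank_p1 : (D2.prefixD 2).rank Ap1 = 0 := by
  rw [Derivation.rank_eq _ _ 0 (by decide) (by omega)]; rfl
lemma P2_rank_q2 : (D2.prefixD 2).rank Aq2 = 0 := by
  rw [Derivation.rank_eq _ _ 0 (by decide) (by omega)]; rfl
lemma P2_rank_p2 : (D2.prefixD 2).rank Ap2 = 1 := by
  rw [Derivation.rank_eq _ _ 1 (by decide) (by decide)]; decide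
lemma P2_rank_r2 : (D2.prefixD 2).rank Ar2 = 1 := by
  rw [Derivation.rank_eq _ _ 2 (by decide) (by decide)]; decide

lemma P1_depth : (D1.prefixD 3).depth = 1 := by
  apply le_antisymm
  · apply iSup₂_le
    intro A hA
    rw [Derivation.allFacts, Set.mem_iUnion] at hA
    obtain ⟨i, hi⟩ := hA
    rw [Finset.mem_coe, D1.prefixD_facts 3 i] at hi
    have hm : A ∈ G1f 3 := D1_facts 3 (by omega) ▸ D1.facts_mono (min_le_right i 3) hi
    simp only [G1f, Finset.mem_insert, Finset.mem_singleton] at hm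
    rcases hm with rfl | rfl | rfl | rfl | rfl
    · rw [P1_rank_p1]; norm_num
    · rw [P1_rank_q2]; norm_num
    · rw [P1_rank_q1]; norm_num
    · rw [P1_rank_r2]; norm_num
    · rw [P1_rank_r1]; norm_num
  · have hm : Aq1 ∈ (D1.prefixD 3).allFacts :=
      Set.mem_iUnion.mpr ⟨1, Finset.mem_coe.mpr (by decide)⟩
    calc (1 : ℕ∞) = (((D1.prefixD 3).rank Aq1 : ℕ) : ℕ∞) := by rw [P1_rank_q1]; rfl
    _ ≤ _ := le_iSup₂_of_le _ hm le_rfl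

lemma P2_depth : (D2.prefixD 2).depth = 1 := by
  apply le_antisymm
  · apply iSup₂_le
    intro A hA
    rw [Derivation.allFacts, Set.mem_iUnion] at hA
    obtain ⟨i, hi⟩ := hA
    rw [Finset.mem_coe, D2.prefixD_facts 2 i] at hi
    have hm : A ∈ G2f 2 := D2_facts 2 (by omega) ▸ D2.facts_mono (min_le_right i 2) hi
    simp only [G2f, Finset.mem_insert, Finset.mem_singleton] at hm
    rcases hm with rfl | rfl | rfl | rfl
    · rw [P2_rank_p1]; norm_num
    · rw [P2_rank_q2]; norm_num
    · rw [P2_rank_p2]; norm_num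
    · rw [P2_rank_r2]; norm_num
  · have hm : Ap2 ∈ (D2.prefixD 2).allFacts :=
      Set.mem_iUnion.mpr ⟨1, Finset.mem_coe.mpr (by decide)⟩
    calc (1 : ℕ∞) = (((D2.prefixD 2).rank Ap2 : ℕ) : ℕ∞) := by rw [P2_rank_p2]; rfl
    _ ≤ _ := le_iSup₂_of_le _ hm le_rfl

lemma D1_bf : IsBF ECond D1 := by
  refine ⟨D1_isderiv, D1_rc, ?_⟩
  intro i hmark
  obtain ⟨hne, j, hij, hjne, hlt, hgap⟩ := hmark
  have hi5 := D1_ts_lt hne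
  have hj5 := D1_ts_lt hjne
  have hi4 : i < 4 := by omega
  have hi2 : i = 2 := by
    by_contra hne2
    have hj' : j = i + 1 := by
      rcases eq_or_ne j (i+1) with h | h
      · exact h
      · exact absurd (hgap (i+1) (by omega) (by omega)) (by interval_cases i <;> decide)
    subst hj'
    interval_cases i
    · rw [D1_tr0, D1_tr1] at hlt; omega
    · rw [D1_tr1, D1_tr2] at hlt; omega
    · exact hne2 rfl
    · rw [D1_tr3, D1_tr4] at hlt; omega
  subst hi2
  exact no_ext D1 3 1 (G1f 3) (D1_facts 3 (by omega)) (by decide) (by decide) (by decide)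
    (fun u hc => by simp [G1f, Ap1, Aq2, Aq1, Ar2, Ar1, Atom.mk.injEq, z1, z2] at hc)
    (fun u hu => by
      simp [G1f, Ap1, Aq2, Aq1, Ar2, Ar1, Atom.mk.injEq, z1, z2] at hu
      rcases hu with h | h <;> subst h <;> decide)
    P1_depth

lemma D2_bf : IsBF ECond D2 := by
  refine ⟨D2_isderiv, D2_rc, ?_⟩
  intro i hmark
  obtain ⟨hne, j, hij, hjne, hlt, hgap⟩ := hmark
  have hi3 := D2_ts_lt hne
  have hj3 := D2_ts_lt hjne
  have hi2 : i < 2 := by omega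
  have hi1 : i = 1 := by
    by_contra hne2
    have hj' : j = i + 1 := by
      rcases eq_or_ne j (i+1) with h | h
      · exact h
      · exact absurd (hgap (i+1) (by omega) (by omega)) (by interval_cases i <;> decide)
    subst hj'
    interval_cases i
    · rw [D2_tr0, D2_tr1] at hlt; omega
    · exact hne2 rfl
  subst hi1
  exact no_ext D2 2 2 (G2f 2) (D2_facts 2 (by omega)) (by decide) (by decide) (by decide)
    (fun u hc => by simp [G2f, Ap1, Aq2, Ap2, Ar2, Atom.mk.injEq, z1, z2] at hc)
    (fun u hu => by
      simp [G2f, Ap1, Aq2, Ap2, Ar2, Atom.mk.injEq, z1, z2] at hu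
      subst hu; decide)
    P2_depth
/-- two breadth-first equivalent-chase derivations from the same
knowledge base may produce a common atom at different ranks: D₁ applies
(R_pq,h₁), (R_qr,h₂), (R_pr,h₁), (R_rs,h₂), (R_rp,h₂) and produces p(z₂) at rank 2,
while D₂ applies (R_qp,h₂), (R_qr,h₂), (R_rs,h₂) and produces p(z₂) at rank 1. -/
theorem statement19 :
    ∃ D₁ D₂ : Derivation Rs19 F19,
      D₁.ts 0 = some ⟨incl 0 1, h1⟩ ∧ D₁.ts 1 = some ⟨incl 1 2, h2⟩ ∧
      D₁.ts 2 = some ⟨incl 0 2, h1⟩ ∧ D₁.ts 3 = some ⟨incl 2 3, h2⟩ ∧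
      D₁.ts 4 = some ⟨incl 2 0, h2⟩ ∧ (∀ i, 5 ≤ i → D₁.ts i = none) ∧
      D₂.ts 0 = some ⟨incl 1 0, h2⟩ ∧ D₂.ts 1 = some ⟨incl 1 2, h2⟩ ∧
      D₂.ts 2 = some ⟨incl 2 3, h2⟩ ∧ (∀ i, 3 ≤ i → D₂.ts i = none) ∧
      IsBF ECond D₁ ∧ IsBF ECond D₂ ∧
      pz2 ∈ D₁.allFacts ∧ pz2 ∈ D₂.allFacts ∧
      D₁.rank pz2 = 2 ∧ D₂.rank pz2 = 1 ∧ D₁.rank pz2 ≠ D₂.rank pz2 := by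
  refine ⟨D1, D2, rfl, rfl, rfl, rfl, rfl,
    fun i hi => List.getElem?_eq_none_iff.mpr (by simpa [L1] using hi), rfl, rfl, rfl,
    fun i hi => List.getElem?_eq_none_iff.mpr (by simpa [L2] using hi), D1_bf, D2_bf,
    Set.mem_iUnion.mpr ⟨5, Finset.mem_coe.mpr (by decide)⟩,
    Set.mem_iUnion.mpr ⟨1, Finset.mem_coe.mpr (by decide)⟩,
    D1_rank_pz2, D2_rank_pz2, by rw [D1_rank_pz2, D2_rank_pz2]; omega⟩

end ChasePaper
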